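/- Let u, v be distinct vertices of a simple graph G with u isolated, and let H be the graph obtained from G by adding all edges between u and N_G(v), possibly adding the edge uv, and then adding at most k additional edges incident to u. Then cz(G,H) ≤ k + 2. -/

import Mathlib

variable {V : Type*}

open Classical in
/-- Local complementation at `v`: complement the induced subgraph on `N_G(v)`. -/
noncomputable def localComp (G : SimpleGraph V) (v : V) : SimpleGraph V where
  Adj x y := x ≠ y ∧ (if G.Adj v x ∧ G.Adj v y then ¬ G.Adj x y else G.Adj x y)
  symm := by
    constructor
    intro x y ⟨hxy, h⟩
    refine ⟨hxy.symm, ?_⟩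
    by_cases hc : G.Adj v x ∧ G.Adj v y
    · rw [if_pos hc] at h
      rw [if_pos ⟨hc.2, hc.1⟩]
      exact fun h' => h h'.symm
    · rw [if_neg hc] at h
      rw [if_neg (fun h' => hc ⟨h'.2, h'.1⟩)]
      exact h.symm
  loopless := ⟨fun x hx => hx.1 rfl⟩

/-- Toggle (add or remove) the edge `uv`. -/
def toggle (G : SimpleGraph V) (u v : V) : SimpleGraph V where
  Adj x y := x ≠ y ∧ Xor' (G.Adj x y) ((x = u ∧ y = v) ∨ (x = v ∧ y = u))
  symm := by
    constructor
    intro x y ⟨hxy, h⟩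
    refine ⟨hxy.symm, ?_⟩
    rw [G.adj_comm y x]
    unfold Xor' at *
    have e : ((y = u ∧ x = v) ∨ (y = v ∧ x = u)) ↔ ((x = u ∧ y = v) ∨ (x = v ∧ y = u)) := by tauto
    rwa [e]
  loopless := ⟨fun x hx => hx.1 rfl⟩

/-- Local equivalence: related by a sequence of local complementations. -/
def LocallyEquiv (G H : SimpleGraph V) : Prop :=
  Relation.ReflTransGen (fun A B => ∃ v, B = localComp A v) G H

/-- `CZle G H k` : there is a sequence `G = G₀, G₀', G₁, G₁', …, G_k, G_k' = H`
with each `Gᵢ'` locally equivalent to `Gᵢ` and each `Gᵢ` (i ≥ 1) obtained from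
`G_{i-1}'` by adding or removing a single edge. -/
inductive CZle : SimpleGraph V → SimpleGraph V → ℕ → Prop
  | base {G H : SimpleGraph V} : LocallyEquiv G H → CZle G H 0
  | step {G G' F H : SimpleGraph V} {k : ℕ} (u v : V) :
      LocallyEquiv G G' → u ≠ v → F = toggle G' u v → CZle F H k → CZle G H (k + 1)

/-- The CZ-distance between two graphs on the same vertex set. -/
noncomputable def czDist (G H : SimpleGraph V) : ℕ := sInf {k | CZle G H k}

/-- The CZ-distance of a graph: CZ-distance to the edgeless graph. -/
noncomputable def cz (G : SimpleGraph V) : ℕ := czDist G ⊥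

open Classical in
/-- Complementing on a vertex set `X`: replace the induced subgraph on `X` by its complement. -/
noncomputable def complOn (G : SimpleGraph V) (X : Set V) : SimpleGraph V :=
  SimpleGraph.fromRel (fun x y => if x ∈ X ∧ y ∈ X then ¬ G.Adj x y else G.Adj x y)

open Classical in
/-- The adjacency matrix over GF(2). -/
noncomputable def adjMat (G : SimpleGraph V) : Matrix V V (ZMod 2) :=
  fun x y => if G.Adj x y then 1 else 0

/-- `H` is a rank-`p` perturbation of `G`. -/
def IsRankPerturbation [Fintype V] (p : ℕ) (G H : SimpleGraph V) : Prop :=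
  ∃ M : Matrix V V (ZMod 2), M.IsSymm ∧ M.rank ≤ p ∧
    ∀ x y : V, x ≠ y → adjMat H x y = adjMat G x y + M x y

/-- `G` is a circle graph: the overlap graph of a family of closed intervals in `ℝ`
with pairwise distinct endpoints. -/
def IsCircleGraph (G : SimpleGraph V) : Prop :=
  ∃ l r : V → ℝ, (∀ v, l v < r v) ∧
    Function.Injective (fun p : V × Bool => if p.2 then r p.1 else l p.1) ∧
    ∀ x y, G.Adj x y ↔
      ((l x < l y ∧ l y < r x ∧ r x < r y) ∨ (l y < l x ∧ l x < r y ∧ r y < r x))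

/-- Two vertex sets are homogeneous: complete or anticomplete to each other. -/
def Homog (G : SimpleGraph V) (X Y : Finset V) : Prop :=
  (∀ x ∈ X, ∀ y ∈ Y, G.Adj x y) ∨ (∀ x ∈ X, ∀ y ∈ Y, ¬ G.Adj x y)

/-- Every part of the partition `P` has red degree (number of other parts it is
inhomogeneous to) at most `k`. -/
def RedDegLE [Fintype V] [DecidableEq V] (G : SimpleGraph V) (P : Finpartition (Finset.univ : Finset V))
    (k : ℕ) : Prop :=
  ∀ X ∈ P.parts, {Y : Finset V | Y ∈ P.parts ∧ Y ≠ X ∧ ¬ Homog G X Y}.ncard ≤ k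

/-- One contraction: merge two parts of the partition. -/
def MergeStep [Fintype V] [DecidableEq V]
    (P Q : Finpartition (Finset.univ : Finset V)) : Prop :=
  ∃ A B, A ∈ P.parts ∧ B ∈ P.parts ∧ A ≠ B ∧
    Q.parts = insert (A ∪ B) ((P.parts.erase A).erase B)

/-- `G` has twin-width at most `k`: there is a contraction (partition) sequence from
the discrete partition to the trivial one in which every partition has red degree at
most `k`. -/
def TwinWidthLE [Fintype V] [DecidableEq V] (G : SimpleGraph V) (k : ℕ) : Prop :=
  ∃ (m : ℕ) (seq : Fin (m + 1) → Finpartition (Finset.univ : Finset V)),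
    (∀ X ∈ (seq 0).parts, X.card = 1) ∧
    (seq (Fin.last m)).parts.card ≤ 1 ∧
    (∀ i : Fin m, MergeStep (seq i.castSucc) (seq i.succ)) ∧
    (∀ i, RedDegLE G (seq i) k)

/-- `H` is obtained from `G` (in which `u` is isolated) by adding all edges between `u`
and `N_G(v)`, possibly adding the edge `uv`, and then adding at most `k` additional
edges incident to `u`. -/
def ExtendStep (k : ℕ) (G H : SimpleGraph V) (u v : V) : Prop :=
  u ≠ v ∧ G.neighborSet u = ∅ ∧
  (∀ x y, x ≠ u → y ≠ u → (H.Adj x y ↔ G.Adj x y)) ∧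
  G.neighborSet v ⊆ H.neighborSet u ∧
  ∃ T : Finset V, T.card ≤ k ∧ H.neighborSet u ⊆ G.neighborSet v ∪ {v} ∪ ↑T


open Classical in
lemma localComp_adj' (G : SimpleGraph V) (v x y : V) :
    (localComp G v).Adj x y ↔
      x ≠ y ∧ (if G.Adj v x ∧ G.Adj v y then ¬ G.Adj x y else G.Adj x y) := Iff.rfl

lemma toggle_adj' (G : SimpleGraph V) (u v x y : V) :
    (toggle G u v).Adj x y ↔
      x ≠ y ∧ Xor' (G.Adj x y) ((x = u ∧ y = v) ∨ (x = v ∧ y = u)) := Iff.rfl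

lemma czle_of_locallyEquiv {G G' H : SimpleGraph V} {m : ℕ}
    (h : LocallyEquiv G G') (hc : CZle G' H m) : CZle G H m := by
  cases hc with
  | base h2 => exact CZle.base (h.trans h2)
  | step a b h1 hne hF hrest => exact CZle.step a b (h.trans h1) hne hF hrest

lemma locallyEquiv_localComp (G : SimpleGraph V) (v : V) :
    LocallyEquiv G (localComp G v) :=
  Relation.ReflTransGen.single ⟨v, rfl⟩

lemma diff_aux (u : V) : ∀ (n : ℕ) (G H : SimpleGraph V) (S : Finset V), S.card ≤ n →
    (∀ x y, x ≠ u → y ≠ u → (H.Adj x y ↔ G.Adj x y)) →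
    (∀ y, ¬(G.Adj u y ↔ H.Adj u y) → y ∈ S) →
    ∃ m, m ≤ S.card ∧ CZle G H m := by
  classical
  intro n
  induction n with
  | zero =>
    intro G H S hcard hoff hdiff
    have hall : ∀ y, G.Adj u y ↔ H.Adj u y := by
      intro y
      rcases em (G.Adj u y ↔ H.Adj u y) with hok | hok
      · exact hok
      · have h1 := hdiff y hok
        have h2 := Finset.card_pos.mpr ⟨y, h1⟩
        omega
    have hEq : G = H := by
      ext x y
      by_cases hx : x = u
      · subst hx; exact hall y
      · by_cases hy : y = u
        · subst hy
          rw [G.adj_comm, H.adj_comm]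
          exact hall x
        · exact (hoff x y hx hy).symm
    exact ⟨0, Nat.zero_le _, CZle.base (hEq ▸ Relation.ReflTransGen.refl)⟩
  | succ n ih =>
    intro G H S hcard hoff hdiff
    by_cases hall : ∀ y, G.Adj u y ↔ H.Adj u y
    · have hEq : G = H := by
        ext x y
        by_cases hx : x = u
        · subst hx; exact hall y
        · by_cases hy : y = u
          · subst hy
            rw [G.adj_comm, H.adj_comm]
            exact hall x
          · exact (hoff x y hx hy).symm
      exact ⟨0, Nat.zero_le _, CZle.base (hEq ▸ Relation.ReflTransGen.refl)⟩
    · obtain ⟨y, hy⟩ := not_forall.mp hall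
      have hyS : y ∈ S := hdiff y hy
      have hne : u ≠ y := by
        intro he
        apply hy
        rw [← he]
        exact iff_of_false (G.loopless.irrefl u) (H.loopless.irrefl u)
      set F := toggle G u y with hF
      have hFadj : ∀ x z, (F.Adj x z ↔ x ≠ z ∧
          Xor' (G.Adj x z) ((x = u ∧ z = y) ∨ (x = y ∧ z = u))) := fun x z => Iff.rfl
      have hoffF : ∀ x z, x ≠ u → z ≠ u → (H.Adj x z ↔ F.Adj x z) := by
        intro x z hx hz
        rw [hFadj]
        unfold Xor'
        have hp : ¬((x = u ∧ z = y) ∨ (x = y ∧ z = u)) := by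
          rintro (⟨rfl, -⟩ | ⟨-, rfl⟩)
          · exact hx rfl
          · exact hz rfl
        rw [hoff x z hx hz]
        constructor
        · intro h
          exact ⟨G.ne_of_adj h, Or.inl ⟨h, hp⟩⟩
        · rintro ⟨-, ⟨h, -⟩ | ⟨h, -⟩⟩
          · exact h
          · exact absurd h hp
      have hdiffF : ∀ z, ¬(F.Adj u z ↔ H.Adj u z) → z ∈ S.erase y := by
        intro z hz
        by_cases hzy : z = y
        · subst hzy
          exfalso
          apply hz
          rw [hFadj]
          unfold Xor'
          have hGH : G.Adj u z ↔ ¬ H.Adj u z := by tauto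
          constructor
          · rintro ⟨-, ⟨hg, hp⟩ | ⟨-, hng⟩⟩
            · exact absurd (Or.inl ⟨rfl, rfl⟩) hp
            · tauto
          · intro h
            refine ⟨hne, Or.inr ⟨Or.inl ⟨rfl, rfl⟩, ?_⟩⟩
            tauto
        · have hzu : z ≠ u := by
            intro he
            apply hz
            rw [he]
            exact iff_of_false (F.loopless.irrefl u) (H.loopless.irrefl u)
          have : ¬(G.Adj u z ↔ H.Adj u z) := by
            intro h
            apply hz
            rw [hFadj]
            unfold Xor'
            have hp : ¬((u = u ∧ z = y) ∨ (u = y ∧ z = u)) := by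
              rintro (⟨-, h'⟩ | ⟨h', -⟩)
              · exact hzy h'
              · exact hne h'
            constructor
            · rintro ⟨-, ⟨hg, -⟩ | ⟨h', -⟩⟩
              · exact h.mp hg
              · exact absurd h' hp
            · intro hh
              exact ⟨fun e => hzu e.symm, Or.inl ⟨h.mpr hh, hp⟩⟩
          exact Finset.mem_erase.mpr ⟨hzy, hdiff z this⟩
      have hcard' : (S.erase y).card ≤ n := by
        have := Finset.card_erase_of_mem hyS
        omega
      obtain ⟨m, hm, hcz⟩ := ih F H (S.erase y) hcard' hoffF hdiffF
      refine ⟨m + 1, ?_, CZle.step u y Relation.ReflTransGen.refl hne rfl hcz⟩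
      have h1 := Finset.card_erase_of_mem hyS
      have h2 := Finset.card_pos.mpr ⟨y, hyS⟩
      omega

theorem stmt11 [Fintype V] (G H : SimpleGraph V) (u v : V) (k : ℕ)
    (h : ExtendStep k G H u v) : czDist G H ≤ k + 2 := by
  classical
  obtain ⟨huv, hiso, hoff, hsub, T, hT, hTsub⟩ := h
  have hu : ∀ z, ¬ G.Adj u z := fun z hz =>
    Set.eq_empty_iff_forall_notMem.mp hiso z hz
  set A := localComp G v with hA
  set B := toggle A u v with hB
  set C := localComp B v with hC
  -- facts about A
  have hAu : ∀ y, ¬ A.Adj u y := by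
    intro y hy
    rw [hA, localComp_adj'] at hy
    rcases hy with ⟨-, h2⟩
    split_ifs at h2 with hc
    · exact hu v hc.1.symm
    · exact hu y h2
  have hAv : ∀ y, A.Adj v y ↔ G.Adj v y := by
    intro y
    rw [hA, localComp_adj']
    constructor
    · rintro ⟨h1, h2⟩
      split_ifs at h2 with hc
      · exact (G.loopless.irrefl v hc.1).elim
      · exact h2
    · intro hg
      refine ⟨G.ne_of_adj hg, ?_⟩
      rw [if_neg (fun hc => G.loopless.irrefl v hc.1)]
      exact hg
  -- facts about B
  have hBu : ∀ y, B.Adj u y ↔ y = v := by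
    intro y
    rw [hB, toggle_adj']
    unfold Xor'
    constructor
    · rintro ⟨h1, ⟨ha, -⟩ | ⟨hp, -⟩⟩
      · exact absurd ha (hAu y)
      · rcases hp with ⟨-, hv⟩ | ⟨hv, -⟩
        · exact hv
        · exact absurd hv huv
    · intro hyv
      rw [hyv]
      exact ⟨huv, Or.inr ⟨Or.inl ⟨rfl, rfl⟩, hAu v⟩⟩
  have hBv : ∀ y, B.Adj v y ↔ (y = u ∨ G.Adj v y) := by
    intro y
    rw [hB, toggle_adj']
    unfold Xor'
    constructor
    · rintro ⟨h1, ⟨ha, -⟩ | ⟨hp, -⟩⟩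
      · exact Or.inr ((hAv y).mp ha)
      · rcases hp with ⟨hvu, -⟩ | ⟨-, hyu⟩
        · exact absurd hvu.symm huv
        · exact Or.inl hyu
    · rintro (rfl | hg)
      · exact ⟨Ne.symm huv, Or.inr ⟨Or.inr ⟨rfl, rfl⟩, fun h => hAu v h.symm⟩⟩
      · have hyu : y ≠ u := by
          rintro rfl
          exact hu v hg.symm
        refine ⟨G.ne_of_adj hg, Or.inl ⟨(hAv y).mpr hg, ?_⟩⟩
        rintro (⟨hvu, -⟩ | ⟨-, hyu'⟩)
        · exact huv hvu.symm
        · exact hyu hyu'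
  have hBoff : ∀ x y, x ≠ u → y ≠ u → (B.Adj x y ↔ A.Adj x y) := by
    intro x y hx hy
    rw [hB, toggle_adj']
    unfold Xor'
    have hp : ¬((x = u ∧ y = v) ∨ (x = v ∧ y = u)) := by
      rintro (⟨h', -⟩ | ⟨-, h'⟩)
      · exact hx h'
      · exact hy h'
    constructor
    · rintro ⟨-, ⟨ha, -⟩ | ⟨h', -⟩⟩
      · exact ha
      · exact absurd h' hp
    · intro ha
      exact ⟨A.ne_of_adj ha, Or.inl ⟨ha, hp⟩⟩
  -- facts about C
  have hCu : ∀ y, y ≠ u → (C.Adj u y ↔ (y = v ∨ G.Adj v y)) := by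
    intro y hy
    rw [hC, localComp_adj']
    have hvu : B.Adj v u := (hBv u).mpr (Or.inl rfl)
    by_cases hgy : G.Adj v y
    · have hby : B.Adj v y := (hBv y).mpr (Or.inr hgy)
      rw [if_pos ⟨hvu, hby⟩]
      constructor
      · intro _
        exact Or.inr hgy
      · intro _
        refine ⟨Ne.symm hy, fun hb => ?_⟩
        have hyv := (hBu y).mp hb
        rw [hyv] at hgy
        exact G.loopless.irrefl v hgy
    · have hby : ¬ B.Adj v y := by
        rw [hBv]
        rintro (rfl | hg)
        · exact hy rfl
        · exact hgy hg
      rw [if_neg (fun hc => hby hc.2), hBu y]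
      constructor
      · rintro ⟨-, rfl⟩
        exact Or.inl rfl
      · rintro (rfl | hg)
        · exact ⟨huv, rfl⟩
        · exact absurd hg hgy
  have hCoff : ∀ x y, x ≠ u → y ≠ u → (C.Adj x y ↔ G.Adj x y) := by
    intro x y hx hy
    rw [hC, localComp_adj']
    have hbx : B.Adj v x ↔ G.Adj v x := by
      rw [hBv]
      constructor
      · rintro (rfl | h')
        · exact absurd rfl hx
        · exact h'
      · exact fun h' => Or.inr h'
    have hby : B.Adj v y ↔ G.Adj v y := by
      rw [hBv]
      constructor
      · rintro (rfl | h')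
        · exact absurd rfl hy
        · exact h'
      · exact fun h' => Or.inr h'
    have hbxy : B.Adj x y ↔ A.Adj x y := hBoff x y hx hy
    have hAxy : A.Adj x y ↔ x ≠ y ∧
        (if G.Adj v x ∧ G.Adj v y then ¬ G.Adj x y else G.Adj x y) := by
      rw [hA, localComp_adj']
    by_cases hgx : G.Adj v x ∧ G.Adj v y
    · rw [if_pos ⟨hbx.mpr hgx.1, hby.mpr hgx.2⟩]
      rw [hbxy, hAxy, if_pos hgx]
      constructor
      · rintro ⟨hne, h2⟩
        by_contra hng
        exact h2 ⟨hne, hng⟩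
      · intro hg
        exact ⟨G.ne_of_adj hg, fun h' => h'.2 hg⟩
    · have : ¬ (B.Adj v x ∧ B.Adj v y) := fun h' => hgx ⟨hbx.mp h'.1, hby.mp h'.2⟩
      rw [if_neg this, hbxy, hAxy, if_neg hgx]
      constructor
      · rintro ⟨-, -, h2⟩
        exact h2
      · intro hg
        exact ⟨G.ne_of_adj hg, G.ne_of_adj hg, hg⟩
  -- apply the diff lemma to C and H
  have hoffCH : ∀ x y, x ≠ u → y ≠ u → (H.Adj x y ↔ C.Adj x y) := by
    intro x y hx hy
    rw [hCoff x y hx hy]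
    exact hoff x y hx hy
  have hdiffCH : ∀ y, ¬(C.Adj u y ↔ H.Adj u y) → y ∈ insert v T := by
    intro y hy
    by_cases hyu : y = u
    · subst hyu
      exact absurd (iff_of_false (C.loopless.irrefl y) (H.loopless.irrefl y)) hy
    · rw [hCu y hyu] at hy
      by_cases hyv : y = v
      · subst hyv
        exact Finset.mem_insert_self y T
      · have h1 : G.Adj v y → H.Adj u y := fun h' =>
          hsub (show y ∈ G.neighborSet v from h')
        have h2 : H.Adj u y := by
          by_contra hn
          apply hy
          constructor
          · rintro (rfl | hg)
            · exact absurd rfl hyv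
            · exact h1 hg
          · intro h'
            exact absurd h' hn
        have h3 := hTsub (show y ∈ H.neighborSet u from h2)
        rcases h3 with (hg | hv) | ht
        · exact absurd (iff_of_true (Or.inr hg) h2) hy
        · exact absurd hv hyv
        · exact Finset.mem_insert_of_mem ht
  obtain ⟨m, hm, hcz⟩ := diff_aux u (insert v T).card C H (insert v T) le_rfl hoffCH hdiffCH
  have hczFH : CZle B H m := czle_of_locallyEquiv (locallyEquiv_localComp B v) hcz
  have hczGH : CZle G H (m + 1) :=
    CZle.step u v (locallyEquiv_localComp G v) huv hB hczFH
  have hmk : m + 1 ≤ k + 2 := by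
    have h1 := Finset.card_insert_le v T
    omega
  calc czDist G H ≤ m + 1 := Nat.sInf_le hczGH
    _ ≤ k + 2 := hmk
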